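/- Assume the standard setup, and let ℓ ≥ 3 be an integer with q ≡ 2^ℓ − 1 (mod 2^{ℓ+1}). Let m = (q0−1)/2 and let H_m be the unique subgroup of Fˣ of order m(q+1). Then the following are equivalent: (a) there exists μ ∈ F such that μ ≠ c1·h1 + c2·h2 for all c1, c2 ∈ K and all h1, h2 ∈ H (i.e., the covering radius of C_s(q0) equals 3 rather than 2); (b) there exists γ ∈ Fˣ with (γ^{q−1})^{2^ℓ} = 1 such that γ (as an element of F) cannot be written as h1 + h2 with h1, h2 ∈ H_m. -/

import Mathlib

open Polynomial

section AuxZetterberg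
variable {F : Type*} [Field F]

private lemma aux_mem_iff_pow [Fintype F] (S : Subgroup Fˣ) {n : ℕ} (hn : 0 < n)
    (hS : Nat.card S = n) {x : Fˣ} : x ∈ S ↔ x ^ n = 1 := by
  classical
  have fwd : ∀ y : Fˣ, y ∈ S → y ^ n = 1 := by
    intro y hy
    have h : (⟨y, hy⟩ : S) ^ n = 1 := by rw [← hS]; exact pow_card_eq_one'
    have := congrArg (Subtype.val) h
    simpa using this
  constructor
  · exact fwd x
  · intro hx
    set R := (powMonoidHom n : Fˣ →* Fˣ).ker with hR
    have hmemR : ∀ y : Fˣ, y ∈ R ↔ y ^ n = 1 := fun y => by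
      simp [hR, MonoidHom.mem_ker, powMonoidHom_apply]
    have hSR : S ≤ R := fun y hy => (hmemR y).mpr (fwd y hy)
    have hcardR : Nat.card R ≤ n := by
      have h1 : Nat.card R = (Finset.univ.filter fun g : Fˣ => g ^ n = 1).card := by
        rw [Nat.card_eq_fintype_card, Fintype.card_subtype]
        congr 1
        ext g
        simp [hmemR]
      rw [h1]
      calc (Finset.univ.filter fun g : Fˣ => g ^ n = 1).card
          ≤ Multiset.card (nthRoots n ((Units.coeHom F) 1)) := by
            simpa using card_nthRoots_subgroup_units (Units.coeHom F) Units.coeHom_injective hn 1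
        _ ≤ n := card_nthRoots n _
    have hfin : S = R := Subgroup.eq_of_le_of_card_ge hSR (by rw [hS]; exact hcardR)
    rw [hfin, hmemR]; exact hx

private lemma aux_mem_unitsRange_iff (K : Subfield F) (u : Fˣ) :
    u ∈ (Units.map (K.subtype : K →+* F).toMonoidHom).range ↔ (u : F) ∈ K := by
  constructor
  · rintro ⟨v, rfl⟩
    exact (v : K).2
  · intro h
    have hinv : ((u⁻¹ : Fˣ) : F) ∈ K := by
      rw [Units.val_inv_eq_inv_val]; exact K.inv_mem h
    refine ⟨⟨⟨(u : F), h⟩, ⟨((u⁻¹ : Fˣ) : F), hinv⟩, ?_, ?_⟩, ?_⟩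
    · ext; simp
    · ext; simp
    · ext; rfl

private lemma aux_card_unitsRange [Fintype F] (K : Subfield F) :
    Nat.card (Units.map (K.subtype : K →+* F).toMonoidHom).range = Nat.card K - 1 := by
  have hinj : Function.Injective (Units.map (K.subtype : K →+* F).toMonoidHom) :=
    Units.map_injective (by exact Subtype.val_injective)
  rw [← Nat.card_congr (MonoidHom.ofInjective hinj).toEquiv, Nat.card_units]

end AuxZetterberg

theorem covering_radius_eq_three_iff (q0 s q ℓ : ℕ) (hq0 : IsPrimePow q0)
    (hq0odd : Odd q0) (hs : Odd s) (hq : q = q0 ^ s) (hℓ : 3 ≤ ℓ)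
    (hqmod : q ≡ 2 ^ ℓ - 1 [MOD 2 ^ (ℓ + 1)])
    (F : Type*) [Field F] [Fintype F] (hF : Fintype.card F = q ^ 2)
    (K : Subfield F) (hK : Nat.card K = q0)
    (H : Subgroup Fˣ) (hH : Nat.card H = q + 1)
    (m : ℕ) (hm : m = (q0 - 1) / 2)
    (Hm : Subgroup Fˣ) (hHm : Nat.card Hm = m * (q + 1)) :
    (∃ μ : F, ∀ c1 c2 : F, c1 ∈ K → c2 ∈ K →
        ∀ h1 h2 : Fˣ, h1 ∈ H → h2 ∈ H → μ ≠ c1 * (h1 : F) + c2 * (h2 : F)) ↔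
      (∃ γ : Fˣ, (γ ^ (q - 1)) ^ 2 ^ ℓ = 1 ∧
        ∀ h1 h2 : Fˣ, h1 ∈ Hm → h2 ∈ Hm → (γ : F) ≠ (h1 : F) + (h2 : F)) := by
  classical
  -- ### arithmetic preliminaries
  have hq0_3 : 3 ≤ q0 := by
    obtain ⟨p, k, hp, hk, rfl⟩ := hq0
    have hpodd : Odd p := by
      rcases hp.nat_prime.eq_two_or_odd' with h2 | ho
      · exfalso
        rw [h2] at hq0odd
        exact (Nat.not_odd_iff_even.mpr (Nat.even_pow.mpr ⟨even_two, hk.ne'⟩)) hq0odd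
      · exact ho
    have hp3 : 3 ≤ p := by
      have := hp.nat_prime.two_le
      rcases Nat.lt_or_ge p 3 with h | h
      · interval_cases p
        · exact absurd hpodd (by decide)
      · exact h
    calc 3 ≤ p := hp3
      _ ≤ p ^ k := Nat.le_self_pow hk.ne' p
  have hs1 : s ≠ 0 := hs.pos.ne'
  have hq3 : 3 ≤ q := by
    rw [hq]; calc 3 ≤ q0 := hq0_3
      _ ≤ q0 ^ s := Nat.le_self_pow hs1 q0
  have hq_odd : Odd q := by rw [hq]; exact hq0odd.pow
  obtain ⟨r0, hr0⟩ := hq0odd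
  have h2m : 2 * m = q0 - 1 := by omega
  have hm_pos : 0 < m := by omega
  -- decomposition of q mod 2^(ℓ+1)
  have hpow8 : 8 ≤ 2 ^ ℓ := by
    calc (8 : ℕ) = 2 ^ 3 := rfl
      _ ≤ 2 ^ ℓ := Nat.pow_le_pow_right (by norm_num) hℓ
  have hpowsucc : 2 ^ (ℓ + 1) = 2 * 2 ^ ℓ := by rw [pow_succ]; ring
  have hmod : q % 2 ^ (ℓ + 1) = 2 ^ ℓ - 1 := by
    have := hqmod
    unfold Nat.ModEq at this
    rw [this, Nat.mod_eq_of_lt (by omega)]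
  set t := q / 2 ^ (ℓ + 1) with htdef
  have ht : q = 2 ^ (ℓ + 1) * t + (2 ^ ℓ - 1) := by
    rw [← hmod]; exact (Nat.div_add_mod q (2 ^ (ℓ + 1))).symm
  set w := 2 * t + 1 with hwdef
  have hw_odd : Odd w := ⟨t, by omega⟩
  have hq1 : q + 1 = 2 ^ ℓ * w := by
    have h := ht
    rw [hpowsucc] at h
    rw [hwdef]
    ring_nf
    ring_nf at h
    omega
  have hq0_dvd : (q0 - 1) ∣ (q - 1) := by
    have := Nat.sub_dvd_pow_sub_pow q0 1 s
    simpa [hq, one_pow] using this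
  have hm_dvd : m ∣ q - 1 := dvd_trans ⟨2, by omega⟩ hq0_dvd
  have hNcard : Nat.card Fˣ = q ^ 2 - 1 := by
    rw [Nat.card_units, Nat.card_eq_fintype_card, hF]
  set N := q ^ 2 - 1 with hNdef
  have hN_eq : N = (q - 1) * (q + 1) := by
    obtain ⟨r, rfl⟩ : ∃ r, q = r + 1 := ⟨q - 1, by omega⟩
    simp only [hNdef, Nat.add_sub_cancel]
    ring_nf
    omega
  set a := (q - 1) * 2 ^ ℓ with hadef
  have ha_pos : 0 < a := Nat.mul_pos (by omega) (by positivity)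
  have haN : a * w = N := by rw [hN_eq, hadef, mul_assoc, ← hq1]
  have ha_dvd_N : a ∣ N := ⟨w, haN.symm⟩
  have hN_pos : 0 < N := by rw [← haN]; positivity
  have hb_dvd_N : m * (q + 1) ∣ N := by rw [hN_eq]; exact Nat.mul_dvd_mul hm_dvd dvd_rfl
  have hw_dvd : w ∣ q + 1 := ⟨2 ^ ℓ, by rw [hq1]; ring⟩
  have hcop : Nat.Coprime a w := by
    have h1 : Nat.Coprime (q - 1) w := by
      have hd2 : Nat.gcd (q - 1) w ∣ 2 := by
        have d1 : Nat.gcd (q - 1) w ∣ q - 1 := Nat.gcd_dvd_left _ _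
        have d2 : Nat.gcd (q - 1) w ∣ q + 1 := (Nat.gcd_dvd_right _ _).trans hw_dvd
        have := Nat.dvd_sub d2 d1
        simpa [show q + 1 - (q - 1) = 2 by omega] using this
      rcases (Nat.dvd_prime Nat.prime_two).mp hd2 with h | h
      · exact h
      · exfalso
        have : (2 : ℕ) ∣ w := h ▸ Nat.gcd_dvd_right _ _
        exact (Nat.not_even_iff_odd.mpr hw_odd) (even_iff_two_dvd.mpr this)
    have h2 : Nat.Coprime (2 ^ ℓ) w :=
      Nat.Coprime.pow_left ℓ (Nat.coprime_two_left.mpr hw_odd)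
    exact Nat.Coprime.mul h1 h2
  -- ### subgroup membership characterizations
  have hq1_pos : 0 < q + 1 := by omega
  have hb_pos : 0 < m * (q + 1) := Nat.mul_pos hm_pos hq1_pos
  have memH : ∀ x : Fˣ, x ∈ H ↔ x ^ (q + 1) = 1 := fun x => aux_mem_iff_pow H hq1_pos hH (x := x)
  have memHm : ∀ x : Fˣ, x ∈ Hm ↔ x ^ (m * (q + 1)) = 1 :=
    fun x => aux_mem_iff_pow Hm hb_pos hHm (x := x)
  have hH_le_Hm : H ≤ Hm := by
    intro x hx
    rw [memHm]
    rw [mul_comm, pow_mul, (memH x).mp hx, one_pow]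
  set Kx := (Units.map (K.subtype : K →+* F).toMonoidHom).range with hKxdef
  have memKx : ∀ u : Fˣ, u ∈ Kx ↔ (u : F) ∈ K := fun u => aux_mem_unitsRange_iff K u
  have cardKx : Nat.card Kx = 2 * m := by rw [aux_card_unitsRange, hK, h2m]
  have hKx_le_Hm : Kx ≤ Hm := by
    intro x hx
    have hx2m : x ^ (2 * m) = 1 := (aux_mem_iff_pow Kx (by omega) cardKx).mp hx
    rw [memHm]
    obtain ⟨k, hk⟩ : (2 * m) ∣ m * (q + 1) := by
      obtain ⟨j, hj⟩ := hq_odd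
      refine ⟨j + 1, by rw [hj]; ring⟩
    rw [hk, pow_mul, hx2m, one_pow]
  -- ### Kx ⊔ H = Hm
  have hsup1 : Kx ⊔ H = Hm := by
    have hle : Kx ⊔ H ≤ Hm := sup_le hKx_le_Hm hH_le_Hm
    have hd1 : (2 * m) ∣ Nat.card (Kx ⊔ H : Subgroup Fˣ) :=
      cardKx ▸ Subgroup.card_dvd_of_le le_sup_left
    have hd2 : (q + 1) ∣ Nat.card (Kx ⊔ H : Subgroup Fˣ) :=
      hH ▸ Subgroup.card_dvd_of_le le_sup_right
    have hlcm : Nat.lcm (2 * m) (q + 1) ∣ Nat.card (Kx ⊔ H : Subgroup Fˣ) :=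
      Nat.lcm_dvd hd1 hd2
    have hgcd2 : Nat.gcd (2 * m) (q + 1) ∣ 2 := by
      have d1 : Nat.gcd (2 * m) (q + 1) ∣ q - 1 := ((Nat.gcd_dvd_left _ _).trans
        (h2m ▸ hq0_dvd))
      have d2 : Nat.gcd (2 * m) (q + 1) ∣ q + 1 := Nat.gcd_dvd_right _ _
      have := Nat.dvd_sub d2 d1
      simpa [show q + 1 - (q - 1) = 2 by omega] using this
    have hb_dvd_lcm : m * (q + 1) ∣ Nat.lcm (2 * m) (q + 1) := by
      have hgl : Nat.gcd (2 * m) (q + 1) * Nat.lcm (2 * m) (q + 1) = 2 * m * (q + 1) :=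
        Nat.gcd_mul_lcm _ _
      rcases (Nat.dvd_prime Nat.prime_two).mp hgcd2 with h | h
      · rw [h, one_mul] at hgl
        exact ⟨2, by rw [hgl]; ring⟩
      · rw [h] at hgl
        have h2' : 2 * Nat.lcm (2 * m) (q + 1) = 2 * (m * (q + 1)) := by
          rw [hgl]; ring
        have := Nat.eq_of_mul_eq_mul_left (by norm_num) h2'
        rw [this]
    have hbd : m * (q + 1) ∣ Nat.card (Kx ⊔ H : Subgroup Fˣ) := hb_dvd_lcm.trans hlcm
    have hcd : Nat.card (Kx ⊔ H : Subgroup Fˣ) ∣ m * (q + 1) :=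
      hHm ▸ Subgroup.card_dvd_of_le hle
    have hcardeq : Nat.card (Kx ⊔ H : Subgroup Fˣ) = m * (q + 1) := Nat.dvd_antisymm hcd hbd
    exact Subgroup.eq_of_le_of_card_ge hle (by rw [hcardeq, hHm])
  have hdecomp : ∀ x : Fˣ, x ∈ Hm → ∃ c ∈ K, ∃ h : Fˣ, h ∈ H ∧ (x : F) = c * (h : F) := by
    intro x hx
    rw [← hsup1] at hx
    obtain ⟨y, hy, z, hz, hyz⟩ := Subgroup.mem_sup.mp hx
    exact ⟨(y : F), (memKx y).mp hy, z, hz, by rw [← hyz]; push_cast; ring⟩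
  -- ### cyclic subgroup Z of order a, and Z ⊔ Hm = ⊤
  obtain ⟨g, hg⟩ := IsCyclic.exists_generator (α := Fˣ)
  have horderg : orderOf g = N := by
    rw [orderOf_eq_card_of_forall_mem_zpowers hg, hNcard]
  set x := g ^ (N / a) with hxdef
  have horderx : orderOf x = a := by
    rw [hxdef, orderOf_pow, horderg, Nat.gcd_eq_right (Nat.div_dvd_of_dvd ha_dvd_N),
      Nat.div_div_self ha_dvd_N hN_pos.ne']
  set Z := Subgroup.zpowers x with hZdef
  have cardZ : Nat.card Z = a := by rw [hZdef, Nat.card_zpowers, horderx]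
  have memZpow : ∀ z : Fˣ, z ∈ Z → z ^ a = 1 :=
    fun z hz => (aux_mem_iff_pow Z ha_pos cardZ).mp hz
  have hsup2 : Z ⊔ Hm = ⊤ := by
    have hd1 : a ∣ Nat.card (Z ⊔ Hm : Subgroup Fˣ) :=
      cardZ ▸ Subgroup.card_dvd_of_le le_sup_left
    have hd2 : w ∣ Nat.card (Z ⊔ Hm : Subgroup Fˣ) := by
      refine dvd_trans ?_ (hHm ▸ Subgroup.card_dvd_of_le le_sup_right)
      exact Dvd.dvd.mul_left hw_dvd m
    have hNd : N ∣ Nat.card (Z ⊔ Hm : Subgroup Fˣ) :=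
      haN ▸ hcop.mul_dvd_of_dvd_of_dvd hd1 hd2
    have hdN : Nat.card (Z ⊔ Hm : Subgroup Fˣ) ∣ N := by
      rw [← hNcard, ← Subgroup.card_top (G := Fˣ)]
      exact Subgroup.card_dvd_of_le le_top
    exact Subgroup.eq_top_of_card_eq _ (by rw [Nat.dvd_antisymm hdN hNd, hNcard])
  -- ### the equivalence
  constructor
  · rintro ⟨μ, hμ⟩
    have hneg1H : (-1 : Fˣ) ∈ H := by
      rw [memH]
      exact Even.neg_one_pow (by obtain ⟨j, hj⟩ := hq_odd; exact ⟨j + 1, by omega⟩)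
    have hμ0 : μ ≠ 0 := by
      intro h0
      exact hμ 1 1 K.one_mem K.one_mem 1 (-1) H.one_mem hneg1H (by
        simp [h0])
    set u := Units.mk0 μ hμ0 with hudef
    have hu : u ∈ Z ⊔ Hm := by rw [hsup2]; trivial
    obtain ⟨z, hz, h, hh, hzh⟩ := Subgroup.mem_sup.mp hu
    refine ⟨z, ?_, ?_⟩
    · rw [← pow_mul]; exact memZpow z hz
    · intro h1 h2 hh1 hh2 heq
      obtain ⟨c1, hc1, e1, he1, hce1⟩ := hdecomp (h1 * h) (Hm.mul_mem hh1 hh)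
      obtain ⟨c2, hc2, e2, he2, hce2⟩ := hdecomp (h2 * h) (Hm.mul_mem hh2 hh)
      refine hμ c1 c2 hc1 hc2 e1 e2 he1 he2 ?_
      have hμval : μ = (z : F) * (h : F) := by
        rw [← hzh] at hudef
        have := congrArg (Units.val) hudef
        simpa using this.symm
      rw [hμval, heq, add_mul, ← Units.val_mul, ← Units.val_mul, hce1, hce2]
  · rintro ⟨γ, _hγpow, hγ⟩
    have hexc : ∃ c ∈ K, c ≠ 0 ∧ c ≠ 1 := by
      by_contra hcon
      push_neg at hcon
      have hsub : (K : Set F) ⊆ {0, 1} := by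
        intro c hc
        rcases em (c = 0) with h | h
        · exact Or.inl h
        · exact Or.inr (hcon c hc h)
      have : Nat.card K ≤ 2 := by
        have h1 : Nat.card K = (K : Set F).ncard := by
          rw [← Nat.card_coe_set_eq]
          rfl
        rw [h1]
        calc (K : Set F).ncard ≤ ({0, 1} : Set F).ncard :=
              Set.ncard_le_ncard hsub ((Set.finite_singleton _).insert _)
          _ ≤ 2 := by
              calc ({0, 1} : Set F).ncard ≤ ({1} : Set F).ncard + 1 := Set.ncard_insert_le _ _
                _ ≤ 2 := by rw [Set.ncard_singleton]
      omega
    obtain ⟨c, hcK, hc0, hc1⟩ := hexc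
    -- helper: an Hm element gives two-term contradiction in the "γ ∈ Hm" case
    have hnotHm : γ ∉ Hm := by
      intro hγHm
      have h1c : (1 : F) - c ≠ 0 := fun h => hc1 (by linear_combination -h)
      have e1 : Units.mk0 c hc0 * γ ∈ Hm :=
        Hm.mul_mem (hKx_le_Hm ((memKx _).mpr (by simpa using hcK))) hγHm
      have e2 : Units.mk0 (1 - c) h1c * γ ∈ Hm :=
        Hm.mul_mem (hKx_le_Hm ((memKx _).mpr (by simpa using K.sub_mem K.one_mem hcK))) hγHm
      exact hγ _ _ e1 e2 (by push_cast [Units.val_mk0]; ring)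
    refine ⟨(γ : F), ?_⟩
    intro c1 c2 hc1K hc2K h1 h2 hh1 hh2 heq
    rcases em (c1 = 0) with hz1 | hz1 <;> rcases em (c2 = 0) with hz2 | hz2
    · rw [hz1, hz2] at heq
      simp at heq
    · -- γ = c2 * h2 ∈ Hm
      apply hnotHm
      have : γ = Units.mk0 c2 hz2 * h2 := by
        ext
        rw [heq, hz1]
        push_cast [Units.val_mk0]
        ring
      rw [this]
      exact Hm.mul_mem (hKx_le_Hm ((memKx _).mpr (by simpa using hc2K))) (hH_le_Hm hh2)
    · apply hnotHm
      have : γ = Units.mk0 c1 hz1 * h1 := by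
        ext
        rw [heq, hz2]
        push_cast [Units.val_mk0]
        ring
      rw [this]
      exact Hm.mul_mem (hKx_le_Hm ((memKx _).mpr (by simpa using hc1K))) (hH_le_Hm hh1)
    · have e1 : Units.mk0 c1 hz1 * h1 ∈ Hm :=
        Hm.mul_mem (hKx_le_Hm ((memKx _).mpr (by simpa using hc1K))) (hH_le_Hm hh1)
      have e2 : Units.mk0 c2 hz2 * h2 ∈ Hm :=
        Hm.mul_mem (hKx_le_Hm ((memKx _).mpr (by simpa using hc2K))) (hH_le_Hm hh2)
      exact hγ _ _ e1 e2 (by rw [heq]; push_cast [Units.val_mk0]; ring)
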